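/- Let p be a prime and let W ⊆ ℤ/pℤ be a nonempty set of residues. If |W| < (p − 1)/2 − (log p)/(log(4/3)), then there exist sets U, V ⊆ ℤ/pℤ forming a prime-compatible pair modulo p with W ⊆ U and W ⊆ V. -/

import Mathlib

open Pointwise

/-- `U, V ⊆ ℤ/pℤ` form a prime-compatible pair modulo `p` if they are nonempty and
`(U \ V) - (V \ U)` is exactly the set of nonzero residues. -/
def PrimeCompatiblePair (p : ℕ) (U V : Set (ZMod p)) : Prop :=
  U.Nonempty ∧ V.Nonempty ∧ (U \ V) - (V \ U) = {0}ᶜ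

set_option linter.unusedSectionVars false

section aux
variable {α : Type*} [Fintype α] [DecidableEq α]

private lemma flip_update_flip (f : α → Bool) (a : α) :
    Function.update (Function.update f a (!(f a))) a
      (!((Function.update f a (!(f a))) a)) = f := by
  funext x
  by_cases hx : x = a
  · subst hx; simp
  · simp [Function.update_of_ne hx]

private lemma half_card (s : Finset (α → Bool)) (a : α) (v : Bool)
    (hs : ∀ f ∈ s, Function.update f a (!(f a)) ∈ s) :
    s.card = 2 * (s.filter fun f => f a = v).card := by
  classical
  have key : (s.filter fun f => f a = v).card = (s.filter fun f => ¬ (f a = v)).card := by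
    refine Finset.card_bij' (fun f _ => Function.update f a (!(f a)))
      (fun f _ => Function.update f a (!(f a))) ?_ ?_ ?_ ?_
    · intro f hf
      simp only [Finset.mem_filter] at hf ⊢
      refine ⟨hs f hf.1, ?_⟩
      simp [hf.2]
    · intro f hf
      simp only [Finset.mem_filter] at hf ⊢
      refine ⟨hs f hf.1, ?_⟩
      have hfa : f a = !v := by cases hv : f a <;> cases v <;> simp_all
      simp [hfa]
    · intro f hf; exact flip_update_flip f a
    · intro f hf; exact flip_update_flip f a
  have hsplit : (s.filter fun f => f a = v).card + (s.filter fun f => ¬(f a = v)).card = s.card :=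
    Finset.card_filter_add_card_filter_not _
  linarith

private lemma quarter_card (B : Finset (α → Bool)) (a b : α) (hab : a ≠ b)
    (ha : ∀ f ∈ B, Function.update f a (!(f a)) ∈ B)
    (hb : ∀ f ∈ B, Function.update f b (!(f b)) ∈ B) :
    B.card = 4 * (B.filter fun f => f a = true ∧ f b = false).card := by
  classical
  have h1 : B.card = 2 * (B.filter fun f => f b = false).card := half_card B b false hb
  have hclosed : ∀ f ∈ B.filter (fun f => f b = false),
      Function.update f a (!(f a)) ∈ B.filter (fun f => f b = false) := by
    intro f hf
    simp only [Finset.mem_filter] at hf ⊢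
    exact ⟨ha f hf.1, by rw [Function.update_of_ne (Ne.symm hab)]; exact hf.2⟩
  have h2 := half_card (B.filter fun f => f b = false) a true hclosed
  rw [Finset.filter_filter] at h2
  have heq : (B.filter fun f => f b = false ∧ f a = true)
      = (B.filter fun f => f a = true ∧ f b = false) :=
    Finset.filter_congr fun f _ => and_comm
  rw [heq] at h2
  linarith

private lemma bad_count (S : Finset (α × α))
    (h1 : ∀ q ∈ S, q.1 ≠ q.2)
    (h2 : ∀ q ∈ S, ∀ r ∈ S, q ≠ r → q.1 ≠ r.1 ∧ q.1 ≠ r.2 ∧ q.2 ≠ r.1 ∧ q.2 ≠ r.2) :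
    (Finset.univ.filter fun f : α → Bool =>
        ∀ q ∈ S, ¬(f q.1 = true ∧ f q.2 = false)).card * 4 ^ S.card
      ≤ 2 ^ Fintype.card α * 3 ^ S.card := by
  classical
  induction S using Finset.induction_on with
  | empty =>
      simp [Finset.card_univ, Fintype.card_fun]
  | @insert q S' hq ih =>
      have h1' : ∀ r ∈ S', r.1 ≠ r.2 := fun r hr => h1 r (Finset.mem_insert_of_mem hr)
      have h2' : ∀ q' ∈ S', ∀ r ∈ S', q' ≠ r →
          q'.1 ≠ r.1 ∧ q'.1 ≠ r.2 ∧ q'.2 ≠ r.1 ∧ q'.2 ≠ r.2 := by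
        intro q' hq' r hr hne
        exact h2 q' (Finset.mem_insert_of_mem hq') r (Finset.mem_insert_of_mem hr) hne
      have IH := ih h1' h2'
      set B' := Finset.univ.filter fun f : α → Bool =>
        ∀ r ∈ S', ¬(f r.1 = true ∧ f r.2 = false) with hB'
      have hcoord : ∀ r ∈ S', q.1 ≠ r.1 ∧ q.1 ≠ r.2 ∧ q.2 ≠ r.1 ∧ q.2 ≠ r.2 := by
        intro r hr
        exact h2 q (Finset.mem_insert_self _ _) r (Finset.mem_insert_of_mem hr)
          (by rintro rfl; exact hq hr)
      have ha : ∀ f ∈ B', Function.update f q.1 (!(f q.1)) ∈ B' := by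
        intro f hf
        simp only [hB', Finset.mem_filter, Finset.mem_univ, true_and] at hf ⊢
        intro r hr
        rw [Function.update_of_ne (Ne.symm (hcoord r hr).1),
          Function.update_of_ne (Ne.symm (hcoord r hr).2.1)]
        exact hf r hr
      have hb : ∀ f ∈ B', Function.update f q.2 (!(f q.2)) ∈ B' := by
        intro f hf
        simp only [hB', Finset.mem_filter, Finset.mem_univ, true_and] at hf ⊢
        intro r hr
        rw [Function.update_of_ne (Ne.symm (hcoord r hr).2.2.1),
          Function.update_of_ne (Ne.symm (hcoord r hr).2.2.2)]
        exact hf r hr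
      have hquart := quarter_card B' q.1 q.2 (h1 q (Finset.mem_insert_self _ _)) ha hb
      have hBeq : (Finset.univ.filter fun f : α → Bool =>
          ∀ r ∈ insert q S', ¬(f r.1 = true ∧ f r.2 = false))
          = B'.filter fun f => ¬(f q.1 = true ∧ f q.2 = false) := by
        rw [hB', Finset.filter_filter]
        apply Finset.filter_congr
        intro f _
        simp [Finset.forall_mem_insert, and_comm]
      rw [hBeq]
      have hsplit : (B'.filter fun f => f q.1 = true ∧ f q.2 = false).card
          + (B'.filter fun f => ¬(f q.1 = true ∧ f q.2 = false)).card = B'.card :=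
        Finset.card_filter_add_card_filter_not _
      have hcard : (B'.filter fun f => ¬(f q.1 = true ∧ f q.2 = false)).card
          = 3 * (B'.filter fun f => f q.1 = true ∧ f q.2 = false).card := by linarith
      rw [Finset.card_insert_of_notMem hq, hcard]
      have : 3 * (B'.filter fun f => f q.1 = true ∧ f q.2 = false).card * 4 ^ (S'.card + 1)
          = 3 * (B'.card * 4 ^ S'.card) := by rw [hquart]; ring
      rw [this, pow_succ]
      calc 3 * (B'.card * 4 ^ S'.card) ≤ 3 * (2 ^ Fintype.card α * 3 ^ S'.card) :=
            Nat.mul_le_mul_left _ IH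
        _ = 2 ^ Fintype.card α * (3 ^ S'.card * 3) := by ring
end aux

/-- If `W ⊆ ℤ/pℤ` is nonempty and `|W| < (p-1)/2 - log p / log (4/3)`, then there
is a prime-compatible pair `U, V` modulo `p` with `W ⊆ U` and `W ⊆ V`. -/
theorem exists_prime_compatible_pair_containing
    (p : ℕ) (hp : p.Prime) (W : Set (ZMod p)) (hW : W.Nonempty)
    (h : (W.ncard : ℝ) < ((p : ℝ) - 1) / 2 - Real.log p / Real.log (4 / 3)) :
    ∃ U V : Set (ZMod p), PrimeCompatiblePair p U V ∧ W ⊆ U ∧ W ⊆ V := by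
  classical
  haveI : Fact p.Prime := ⟨hp⟩
  haveI : NeZero p := ⟨hp.ne_zero⟩
  set L : ℝ := Real.log p / Real.log (4 / 3) with hLdef
  have hlog43 : 0 < Real.log (4 / 3) := Real.log_pos (by norm_num)
  have hL0 : 0 ≤ L := div_nonneg (Real.log_nonneg (by exact_mod_cast hp.one_lt.le)) hlog43.le
  have hm1 : 1 ≤ W.ncard := by
    have := W.toFinite
    rwa [Nat.one_le_iff_ne_zero, ← Nat.pos_iff_ne_zero, Set.ncard_pos this]
  have hmR : (1 : ℝ) ≤ (W.ncard : ℝ) := by exact_mod_cast hm1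
  -- p is odd
  have hp2 : p ≠ 2 := by
    rintro rfl
    have h43 : Real.log (4 / 3) ≤ Real.log 2 := Real.log_le_log (by norm_num) (by norm_num)
    have hL1 : (1 : ℝ) ≤ L := (one_le_div hlog43).mpr (by norm_num at h43 ⊢; exact h43)
    have : ((2 : ℕ) : ℝ) = 2 := by norm_num
    rw [this] at h
    nlinarith [h, hmR, hL1]
  obtain ⟨P, hPdef⟩ : Odd p := hp.odd_of_ne_two hp2
  set C : Finset (ZMod p) := Finset.univ.filter (fun x => x ∉ W) with hCdef
  set n : ℕ := C.card with hndef
  have hcards : n + W.ncard = p := by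
    have h1 : W.ncard = (Finset.univ.filter (fun x : ZMod p => x ∈ W)).card := by
      rw [Set.ncard_eq_toFinset_card' W]
      congr 1
      ext x
      simp
    have h2 : (Finset.univ.filter (fun x : ZMod p => x ∈ W)).card
        + (Finset.univ.filter (fun x : ZMod p => x ∉ W)).card = p := by
      rw [Finset.card_filter_add_card_filter_not, Finset.card_univ, ZMod.card]
    rw [hndef, hCdef, h1]
    omega
  set M : ℕ := Nat.floor L + 1 with hMdef
  have hML : L < M := by exact_mod_cast Nat.lt_floor_add_one L
  have hMle : (M : ℝ) ≤ L + 1 := by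
    rw [hMdef]
    push_cast
    have := Nat.floor_le hL0
    linarith
  have hpR : (p : ℝ) = 2 * P + 1 := by exact_mod_cast hPdef
  have hnR : (n : ℝ) = (p : ℝ) - W.ncard := by
    have : (n : ℝ) + W.ncard = p := by exact_mod_cast hcards
    linarith
  have hPMn : P + 1 + M ≤ n := by
    have hfl : ((⌊L⌋₊ : ℕ) : ℝ) ≤ L := Nat.floor_le hL0
    have hlt : ((P + M : ℕ) : ℝ) < (n : ℝ) := by
      push_cast
      linarith [h, hnR, hpR, hfl]
    have : P + M < n := by exact_mod_cast hlt
    omega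
  have hp4M : (p : ℝ) < (4 / 3 : ℝ) ^ M := by
    have hlog : Real.log p < Real.log ((4 / 3 : ℝ) ^ M) := by
      rw [Real.log_pow]
      have : L * Real.log (4 / 3) < M * Real.log (4 / 3) :=
        mul_lt_mul_of_pos_right hML hlog43
      rw [hLdef, div_mul_cancel₀ _ hlog43.ne'] at this
      exact this
    have hp0 : (0 : ℝ) < p := by exact_mod_cast hp.pos
    calc (p : ℝ) = Real.exp (Real.log p) := (Real.exp_log hp0).symm
      _ < Real.exp (Real.log ((4 / 3 : ℝ) ^ M)) := Real.exp_lt_exp.mpr hlog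
      _ = (4 / 3 : ℝ) ^ M := Real.exp_log (by positivity)
  have natmain : (p - 1) * 3 ^ M < 4 ^ M := by
    have h3M : (0 : ℝ) < (3 : ℝ) ^ M := by positivity
    have hR : ((p : ℝ) - 1) * 3 ^ M < 4 ^ M := by
      have h43 : ((4 / 3 : ℝ) ^ M) * 3 ^ M = 4 ^ M := by
        rw [← mul_pow]; norm_num
      nlinarith [hp4M, h3M]
    have : (((p - 1) * 3 ^ M : ℕ) : ℝ) < ((4 ^ M : ℕ) : ℝ) := by
      push_cast [Nat.cast_sub hp.one_lt.le]
      exact hR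
    exact_mod_cast this
  -- injectivity of i ↦ i•z for i < p
  have hinj : ∀ z : ZMod p, z ≠ 0 → ∀ i j : ℕ, i < p → j < p →
      (i : ZMod p) * z = (j : ZMod p) * z → i = j := by
    intro z hz i j hi hj hij
    have h1 : (i : ZMod p) = (j : ZMod p) := mul_right_cancel₀ hz hij
    have h2 := congrArg ZMod.val h1
    rwa [ZMod.val_cast_of_lt hi, ZMod.val_cast_of_lt hj] at h2
  set av : ZMod p → ℕ → ZMod p := fun z j => ((2 * j + 1 : ℕ) : ZMod p) * z with havdef
  set bv : ZMod p → ℕ → ZMod p := fun z j => ((2 * j : ℕ) : ZMod p) * z with hbvdef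
  set G : ZMod p → Finset ℕ :=
    fun z => (Finset.range P).filter (fun j => av z j ∉ W ∧ bv z j ∉ W) with hGdef
  -- every element of C is (i : ZMod p) * z for a unique i < p
  have hrepr : ∀ z : ZMod p, z ≠ 0 → ∀ x : ZMod p, ∃ i : ℕ, i < p ∧ x = (i : ZMod p) * z := by
    intro z hz x
    refine ⟨(x * z⁻¹).val, ZMod.val_lt _, ?_⟩
    rw [ZMod.natCast_val, ZMod.cast_id]
    field_simp
  have hGcard : ∀ z : ZMod p, z ≠ 0 → M ≤ (G z).card := by
    intro z hz
    have hcover : C ⊆ insert (((2 * P : ℕ) : ZMod p) * z)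
        ((Finset.range P).biUnion (fun j => ({av z j, bv z j} : Finset (ZMod p)) ∩ C)) := by
      intro x hx
      obtain ⟨i, hip, hxi⟩ := hrepr z hz x
      rcases eq_or_ne i (2 * P) with hi | hi
      · subst hi
        rw [Finset.mem_insert]
        left
        exact hxi
      · have hilt : i < 2 * P := by omega
        rw [Finset.mem_insert]
        right
        rw [Finset.mem_biUnion]
        rcases Nat.even_or_odd i with ⟨j, hj⟩ | ⟨j, hj⟩
        · have hjP : j < P := by omega
          refine ⟨j, Finset.mem_range.mpr hjP, Finset.mem_inter.mpr ⟨?_, hx⟩⟩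
          have hij : (2 * j : ℕ) = i := by omega
          simp only [Finset.mem_insert, Finset.mem_singleton, havdef, hbvdef]
          right
          rw [hij, hxi]
        · have hjP : j < P := by omega
          refine ⟨j, Finset.mem_range.mpr hjP, Finset.mem_inter.mpr ⟨?_, hx⟩⟩
          have hij : (2 * j + 1 : ℕ) = i := by omega
          simp only [Finset.mem_insert, Finset.mem_singleton, havdef, hbvdef]
          left
          rw [hij, hxi]
    have hCmem : ∀ x : ZMod p, x ∈ C ↔ x ∉ W := by
      intro x
      simp [hCdef]
    have hsum : n ≤ 1 + ∑ j ∈ Finset.range P, (({av z j, bv z j} : Finset (ZMod p)) ∩ C).card := by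
      calc n ≤ (insert (((2 * P : ℕ) : ZMod p) * z)
            ((Finset.range P).biUnion (fun j => ({av z j, bv z j} : Finset (ZMod p)) ∩ C))).card :=
          Finset.card_le_card hcover
        _ ≤ 1 + ((Finset.range P).biUnion
            (fun j => ({av z j, bv z j} : Finset (ZMod p)) ∩ C)).card := by
          rw [add_comm]
          exact Finset.card_insert_le _ _
        _ ≤ 1 + ∑ j ∈ Finset.range P, (({av z j, bv z j} : Finset (ZMod p)) ∩ C).card :=
          Nat.add_le_add_left (Finset.card_biUnion_le) 1
    have hterm : ∀ j ∈ Finset.range P,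
        (({av z j, bv z j} : Finset (ZMod p)) ∩ C).card ≤ if j ∈ G z then 2 else 1 := by
      intro j hj
      by_cases hjG : j ∈ G z
      · simp only [hjG, if_true]
        calc (({av z j, bv z j} : Finset (ZMod p)) ∩ C).card
            ≤ ({av z j, bv z j} : Finset (ZMod p)).card :=
              Finset.card_le_card Finset.inter_subset_left
          _ ≤ 2 := (Finset.card_insert_le _ _).trans (by simp)
      · simp only [hjG, if_false]
        have hW' : av z j ∈ W ∨ bv z j ∈ W := by
          by_contra hc
          push_neg at hc
          exact hjG (Finset.mem_filter.mpr ⟨hj, hc.1, hc.2⟩)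
        rcases hW' with hav | hbv
        · have hsub : ({av z j, bv z j} : Finset (ZMod p)) ∩ C ⊆ {bv z j} := by
            intro x hx
            rw [Finset.mem_inter] at hx
            rcases Finset.mem_insert.mp hx.1 with rfl | hxb
            · exact absurd hav ((hCmem _).mp hx.2)
            · exact hxb
          exact (Finset.card_le_card hsub).trans (by simp)
        · have hsub : ({av z j, bv z j} : Finset (ZMod p)) ∩ C ⊆ {av z j} := by
            intro x hx
            rw [Finset.mem_inter] at hx
            rcases Finset.mem_insert.mp hx.1 with rfl | hxb
            · exact Finset.mem_singleton_self _
            · rw [Finset.mem_singleton.mp hxb] at hx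
              exact absurd hbv ((hCmem _).mp hx.2)
          exact (Finset.card_le_card hsub).trans (by simp)
    have hsum2 : ∑ j ∈ Finset.range P, (({av z j, bv z j} : Finset (ZMod p)) ∩ C).card
        ≤ P + (G z).card := by
      calc ∑ j ∈ Finset.range P, (({av z j, bv z j} : Finset (ZMod p)) ∩ C).card
          ≤ ∑ j ∈ Finset.range P, (if j ∈ G z then 2 else 1) := Finset.sum_le_sum hterm
        _ = ∑ j ∈ Finset.range P, (1 + if j ∈ G z then 1 else 0) := by
            apply Finset.sum_congr rfl
            intro j _
            by_cases hjG : j ∈ G z <;> simp [hjG]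
        _ = P + ∑ j ∈ Finset.range P, (if j ∈ G z then 1 else 0) := by
            rw [Finset.sum_add_distrib, Finset.sum_const, Finset.card_range, smul_eq_mul, mul_one]
        _ = P + (G z).card := by
            congr 1
            have hfe : (Finset.range P).filter (fun j => j ∈ G z) = G z := by
              ext j
              simp only [Finset.mem_filter]
              exact ⟨fun h => h.2, fun hjG => ⟨Finset.filter_subset _ _ hjG, hjG⟩⟩
            have hcf := Finset.card_filter (fun j => j ∈ G z) (Finset.range P)
            rw [← hcf, hfe]
    omega
  -- the set of colorings failing to cover z
  set Bad : ZMod p → Finset (ZMod p → Bool) := fun z =>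
    Finset.univ.filter (fun f => ∀ j ∈ G z, ¬(f (av z j) = true ∧ f (bv z j) = false))
    with hBaddef
  have hBadcard : ∀ z : ZMod p, z ≠ 0 → (Bad z).card * 4 ^ M ≤ 2 ^ p * 3 ^ M := by
    intro z hz
    obtain ⟨S, hSG, hScard⟩ := Finset.exists_subset_card_eq (hGcard z hz)
    have hSP : ∀ j ∈ S, j < P := fun j hj =>
      Finset.mem_range.mp (Finset.filter_subset _ _ (hSG hj))
    have hidx : ∀ j ∈ S, 2 * j < p ∧ 2 * j + 1 < p := by
      intro j hj
      have := hSP j hj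
      omega
    set Q : Finset (ZMod p × ZMod p) := S.image (fun j => (av z j, bv z j)) with hQdef
    have havbv : ∀ j, av z j = ((2 * j + 1 : ℕ) : ZMod p) * z := fun j => rfl
    have hbvbv : ∀ j, bv z j = ((2 * j : ℕ) : ZMod p) * z := fun j => rfl
    have hQcard : Q.card = M := by
      rw [hQdef, Finset.card_image_of_injOn, hScard]
      intro j hj j' hj' hjj'
      have h1 : av z j = av z j' := congrArg Prod.fst hjj'
      rw [havbv, havbv] at h1
      have := hinj z hz _ _ (hidx j hj).2 (hidx j' hj').2 h1
      omega
    have h1Q : ∀ q ∈ Q, q.1 ≠ q.2 := by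
      intro q hq
      obtain ⟨j, hj, rfl⟩ := Finset.mem_image.mp hq
      simp only
      intro hc
      rw [havbv, hbvbv] at hc
      have := hinj z hz _ _ (hidx j hj).2 (hidx j hj).1 hc
      omega
    have h2Q : ∀ q ∈ Q, ∀ r ∈ Q, q ≠ r →
        q.1 ≠ r.1 ∧ q.1 ≠ r.2 ∧ q.2 ≠ r.1 ∧ q.2 ≠ r.2 := by
      intro q hq r hr hqr
      obtain ⟨j, hj, rfl⟩ := Finset.mem_image.mp hq
      obtain ⟨j', hj', rfl⟩ := Finset.mem_image.mp hr
      have hjj' : j ≠ j' := by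
        rintro rfl
        exact hqr rfl
      have hj2 := (hidx j hj)
      have hj'2 := (hidx j' hj')
      refine ⟨?_, ?_, ?_, ?_⟩ <;> simp only <;> intro hc
      · rw [havbv, havbv] at hc
        have := hinj z hz _ _ hj2.2 hj'2.2 hc
        omega
      · rw [havbv, hbvbv] at hc
        have := hinj z hz _ _ hj2.2 hj'2.1 hc
        omega
      · rw [hbvbv, havbv] at hc
        have := hinj z hz _ _ hj2.1 hj'2.2 hc
        omega
      · rw [hbvbv, hbvbv] at hc
        have := hinj z hz _ _ hj2.1 hj'2.1 hc
        omega
    have hcount := bad_count Q h1Q h2Q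
    rw [hQcard, ZMod.card p] at hcount
    refine le_trans (Nat.mul_le_mul_right _ ?_) hcount
    apply Finset.card_le_card
    intro f hf
    rw [hBaddef] at hf
    simp only [Finset.mem_filter, Finset.mem_univ, true_and] at hf ⊢
    intro q hq
    obtain ⟨j, hj, rfl⟩ := Finset.mem_image.mp hq
    exact hf j (hSG hj)
  -- union bound
  have hcardall : (Finset.univ : Finset (ZMod p → Bool)).card = 2 ^ p := by
    rw [Finset.card_univ, Fintype.card_fun, Fintype.card_bool, ZMod.card]
  set BadAll : Finset (ZMod p → Bool) :=
    ((Finset.univ : Finset (ZMod p)).erase 0).biUnion Bad with hBadAlldef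
  have hBadAll : BadAll.card < 2 ^ p := by
    have h1 : BadAll.card ≤ ∑ z ∈ (Finset.univ : Finset (ZMod p)).erase 0, (Bad z).card :=
      Finset.card_biUnion_le
    have h2 : (∑ z ∈ (Finset.univ : Finset (ZMod p)).erase 0, (Bad z).card) * 4 ^ M
        ≤ (p - 1) * (2 ^ p * 3 ^ M) := by
      rw [Finset.sum_mul]
      calc ∑ z ∈ (Finset.univ : Finset (ZMod p)).erase 0, (Bad z).card * 4 ^ M
          ≤ ∑ _z ∈ (Finset.univ : Finset (ZMod p)).erase 0, 2 ^ p * 3 ^ M := by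
            apply Finset.sum_le_sum
            intro z hz
            exact hBadcard z (Finset.ne_of_mem_erase hz)
        _ = (p - 1) * (2 ^ p * 3 ^ M) := by
            rw [Finset.sum_const, smul_eq_mul, Finset.card_erase_of_mem (Finset.mem_univ _),
              Finset.card_univ, ZMod.card]
    have h3 : (p - 1) * (2 ^ p * 3 ^ M) < 2 ^ p * 4 ^ M := by
      calc (p - 1) * (2 ^ p * 3 ^ M) = 2 ^ p * ((p - 1) * 3 ^ M) := by ring
        _ < 2 ^ p * 4 ^ M := by
            exact (Nat.mul_lt_mul_left (Nat.two_pow_pos p)).mpr natmain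
    have h4 : BadAll.card * 4 ^ M < 2 ^ p * 4 ^ M :=
      lt_of_le_of_lt (Nat.mul_le_mul_right _ h1) (lt_of_le_of_lt h2 h3)
    exact Nat.lt_of_mul_lt_mul_right h4
  -- pick a good coloring
  obtain ⟨f, hf⟩ : ∃ f : ZMod p → Bool, f ∉ BadAll := by
    by_contra hc
    push_neg at hc
    have : (Finset.univ : Finset (ZMod p → Bool)) ⊆ BadAll := fun f _ => hc f
    have := Finset.card_le_card this
    rw [hcardall] at this
    omega
  have hgood : ∀ z : ZMod p, z ≠ 0 → ∃ j ∈ G z,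
      f (av z j) = true ∧ f (bv z j) = false := by
    intro z hz
    have hfz : f ∉ Bad z := by
      intro hfz
      exact hf (Finset.mem_biUnion.mpr ⟨z, Finset.mem_erase.mpr ⟨hz, Finset.mem_univ _⟩, hfz⟩)
    rw [hBaddef] at hfz
    simp only [Finset.mem_filter, Finset.mem_univ, true_and, not_forall, not_not] at hfz
    obtain ⟨j, hj, hfj⟩ := hfz
    exact ⟨j, hj, hfj⟩
  -- construct the pair
  set X : Set (ZMod p) := {x | x ∉ W ∧ f x = true} with hXdef
  set Y : Set (ZMod p) := {x | x ∉ W ∧ f x = false} with hYdef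
  refine ⟨W ∪ X, W ∪ Y, ⟨hW.mono Set.subset_union_left, hW.mono Set.subset_union_left, ?_⟩,
    Set.subset_union_left, Set.subset_union_left⟩
  have hUV : (W ∪ X) \ (W ∪ Y) = X := by
    ext x
    simp only [Set.mem_diff, Set.mem_union, hXdef, hYdef, Set.mem_setOf_eq]
    constructor
    · rintro ⟨hx1, hx2⟩
      push_neg at hx2
      rcases hx1 with hx | hx
      · exact absurd hx hx2.1
      · exact hx
    · intro hx
      refine ⟨Or.inr hx, ?_⟩
      push_neg
      refine ⟨hx.1, fun _ => ?_⟩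
      rw [hx.2]
      simp
  have hVU : (W ∪ Y) \ (W ∪ X) = Y := by
    ext x
    simp only [Set.mem_diff, Set.mem_union, hXdef, hYdef, Set.mem_setOf_eq]
    constructor
    · rintro ⟨hx1, hx2⟩
      push_neg at hx2
      rcases hx1 with hx | hx
      · exact absurd hx hx2.1
      · exact hx
    · intro hx
      refine ⟨Or.inr hx, ?_⟩
      push_neg
      refine ⟨hx.1, fun _ => ?_⟩
      rw [hx.2]
      simp
  rw [hUV, hVU]
  ext z
  rw [Set.mem_sub]
  simp only [Set.mem_compl_iff, Set.mem_singleton_iff]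
  constructor
  · rintro ⟨x, hx, y, hy, rfl⟩
    intro hc
    have hxy : x = y := sub_eq_zero.mp hc
    rw [hXdef, Set.mem_setOf_eq] at hx
    rw [hYdef, Set.mem_setOf_eq] at hy
    rw [hxy, hy.2] at hx
    exact Bool.false_ne_true hx.2
  · intro hz
    obtain ⟨j, hj, hfa, hfb⟩ := hgood z hz
    have hjW : av z j ∉ W ∧ bv z j ∉ W := (Finset.mem_filter.mp hj).2
    refine ⟨av z j, ⟨hjW.1, hfa⟩, bv z j, ⟨hjW.2, hfb⟩, ?_⟩
    rw [havdef, hbvdef]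
    simp only
    push_cast
    ring
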